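/- Let γ : ℝ → ℝ be continuously differentiable, 1-periodic, with γ(t) ≥ 0 for all t and A := sup_t |γ′(t)| < ∞, and let g : ℝ → ℝ be continuous and 1-periodic. Define p(t) := g(t)·√(1 + γ′(t)²) and ⟨p⟩ := ∫₀¹ p(t) dt. Then there exists a constant C > 0 depending only on A and sup_t γ(t) such that for every positive integer N with ε := 1/N satisfying ε·sup_t γ(t) ≤ 1, and every φ : ℝ² → ℝ that is C¹ on an open neighborhood of [0,1]²: |∫₀¹ p(x₁/ε)·φ(x₁, εγ(x₁/ε)) dx₁ − ⟨p⟩·∫₀¹ φ(x₁, 0) dx₁| ≤ C√ε · (∫₀¹ g(x₁/ε)²·√(1+γ′(x₁/ε)²) dx₁)^{1/2} · (∫_{(0,1)²} (φ² + ‖∇φ‖²) dx)^{1/2}. -/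

import Mathlib

open MeasureTheory Set
open scoped ENNReal


lemma conj22 : Real.HolderConjugate 2 2 := Real.HolderConjugate.two_two

lemma cs_abs {α : Type*} [MeasurableSpace α] {μ : Measure α} [IsFiniteMeasure μ] {f g : α → ℝ}
    (hf : MemLp f 2 μ) (hg : MemLp g 2 μ) :
    |∫ a, f a * g a ∂μ| ≤ Real.sqrt (∫ a, (f a)^2 ∂μ) * Real.sqrt (∫ a, (g a)^2 ∂μ) := by
  have h2 : (2 : ℝ≥0∞) = ENNReal.ofReal (2:ℝ) := by norm_num
  have hint := MeasureTheory.integral_mul_le_Lp_mul_Lq_of_nonneg (μ := μ) conj22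
    (ae_of_all μ (fun a => abs_nonneg (f a))) (ae_of_all μ (fun a => abs_nonneg (g a)))
    (h2 ▸ hf.norm) (h2 ▸ hg.norm)
  have h1 : |∫ a, f a * g a ∂μ| ≤ ∫ a, |f a| * |g a| ∂μ := by
    calc |∫ a, f a * g a ∂μ| ≤ ∫ a, ‖f a * g a‖ ∂μ := by
          simpa [Real.norm_eq_abs] using norm_integral_le_integral_norm (fun a => f a * g a) (μ := μ)
      _ = ∫ a, |f a| * |g a| ∂μ := by simp [abs_mul, Real.norm_eq_abs]
  refine h1.trans ?_
  calc ∫ a, |f a| * |g a| ∂μ ≤ (∫ a, |f a| ^ (2:ℝ) ∂μ) ^ (1/(2:ℝ)) * (∫ a, |g a| ^ (2:ℝ) ∂μ) ^ (1/(2:ℝ)) := hint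
    _ = Real.sqrt (∫ a, (f a)^2 ∂μ) * Real.sqrt (∫ a, (g a)^2 ∂μ) := by
        rw [← Real.sqrt_eq_rpow, ← Real.sqrt_eq_rpow]
        congr 1 <;> congr 1 <;> refine integral_congr_ae (ae_of_all μ fun a => ?_)
        · simp only [← Real.rpow_natCast]; norm_num [sq_abs]
        · simp only [← Real.rpow_natCast]; norm_num [sq_abs]



lemma memLp2_Ioc {f : ℝ → ℝ} (hf : Continuous f) {a b : ℝ} :
    MemLp f 2 (volume.restrict (Ioc a b)) := by
  obtain ⟨C, hC⟩ := (isCompact_Icc (a := a) (b := b)).exists_bound_of_continuousOn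
    hf.continuousOn
  refine MemLp.of_bound hf.aestronglyMeasurable.restrict C ?_
  refine (ae_restrict_iff' measurableSet_Ioc).mpr (ae_of_all _ fun x hx => ?_)
  exact hC x (Ioc_subset_Icc_self hx)

lemma cs_interval {f g : ℝ → ℝ} {a b : ℝ} (hab : a ≤ b) (hf : Continuous f)
    (hg : Continuous g) :
    |∫ x in a..b, f x * g x| ≤
      Real.sqrt (∫ x in a..b, (f x)^2) * Real.sqrt (∫ x in a..b, (g x)^2) := by
  rw [intervalIntegral.integral_of_le hab, intervalIntegral.integral_of_le hab,
    intervalIntegral.integral_of_le hab]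
  exact cs_abs (memLp2_Ioc hf) (memLp2_Ioc hg)

lemma l2_interval {g : ℝ → ℝ} {b : ℝ} (hb : 0 ≤ b) (hg : Continuous g) :
    |∫ x in (0:ℝ)..b, g x| ≤ Real.sqrt b * Real.sqrt (∫ x in (0:ℝ)..b, (g x)^2) := by
  have h := cs_interval hb continuous_const hg (f := fun _ => (1:ℝ))
  simpa using h

lemma per_split {h : ℝ → ℝ} (hc : Continuous h) {T : ℝ} (hp : Function.Periodic h T)
    (N : ℕ) : ∫ x in (0:ℝ)..(N * T), h x = N * ∫ x in (0:ℝ)..T, h x := by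
  have := hp.intervalIntegral_add_zsmul_eq (N : ℤ) 0
    (fun t₁ t₂ => hc.intervalIntegrable t₁ t₂)
  simpa [zsmul_eq_mul] using this

lemma scale_int {h : ℝ → ℝ} (hc : Continuous h) (hp : Function.Periodic h 1)
    {N : ℕ} (hN : 0 < N) {ε : ℝ} (hε : ε = 1 / N) :
    ∫ x in (0:ℝ)..1, h (x / ε) = ∫ t in (0:ℝ)..1, h t := by
  have hN0 : (N:ℝ) ≠ 0 := Nat.cast_ne_zero.mpr hN.ne'
  have hε0 : ε ≠ 0 := by rw [hε]; positivity
  rw [intervalIntegral.integral_comp_div (f := h) hε0]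
  have h1 : (1:ℝ)/ε = N := by rw [hε]; field_simp
  have h0 : (0:ℝ)/ε = 0 := by simp
  rw [h0, h1, show ((N:ℝ)) = (N:ℝ) * 1 by ring, per_split hc hp N, smul_eq_mul, hε]
  field_simp

lemma integrableOn_prod_cont {f : ℝ × ℝ → ℝ} (hf : Continuous f) {s t : Set ℝ}
    {a b c d : ℝ} (hs : s ⊆ Icc a b) (ht : t ⊆ Icc c d) :
    IntegrableOn f (s ×ˢ t) := by
  exact ((hf.continuousOn).integrableOn_compact (isCompact_Icc.prod isCompact_Icc)).mono_set
    (prod_mono hs ht)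

lemma integrable_prod_restrict {f : ℝ × ℝ → ℝ} (hf : Continuous f) {s t : Set ℝ}
    {a b c d : ℝ} (hs : s ⊆ Icc a b) (ht : t ⊆ Icc c d) :
    Integrable f ((volume.restrict s).prod (volume.restrict t)) := by
  rw [Measure.prod_restrict]
  have h := integrableOn_prod_cont hf hs ht
  rwa [IntegrableOn, Measure.volume_eq_prod] at h

lemma swap_II {f : ℝ × ℝ → ℝ} (hf : Continuous f)
    {a b : ℝ} (ha : 0 ≤ a) (hb : 0 ≤ b) :
    ∫ x in (0:ℝ)..a, (∫ s in (0:ℝ)..b, f (x, s)) =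
      ∫ s in (0:ℝ)..b, (∫ x in (0:ℝ)..a, f (x, s)) := by
  simp only [intervalIntegral.integral_of_le ha, intervalIntegral.integral_of_le hb]
  exact integral_integral_swap
    (integrable_prod_restrict hf Ioc_subset_Icc_self Ioc_subset_Icc_self (a := 0) (b := a)
      (c := 0) (d := b))

lemma prod_II {f : ℝ × ℝ → ℝ} (hf : Continuous f)
    {a b : ℝ} (ha : 0 ≤ a) (hb : 0 ≤ b) :
    ∫ z in Ioo (0:ℝ) a ×ˢ Ioo (0:ℝ) b, f z = ∫ x in (0:ℝ)..a, ∫ s in (0:ℝ)..b, f (x, s) := by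
  have hint : IntegrableOn f (Ioo (0:ℝ) a ×ˢ Ioo (0:ℝ) b) (volume.prod volume) := by
    have h := integrableOn_prod_cont hf Ioo_subset_Icc_self Ioo_subset_Icc_self (a := 0)
      (b := a) (c := 0) (d := b)
    rwa [IntegrableOn, Measure.volume_eq_prod] at h
  simp only [intervalIntegral.integral_of_le ha, intervalIntegral.integral_of_le hb,
    integral_Ioc_eq_integral_Ioo]
  rw [Measure.volume_eq_prod]
  exact setIntegral_prod f hint

lemma sq_cs_interval {f g : ℝ → ℝ} {a b : ℝ} (hab : a ≤ b) (hf : Continuous f)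
    (hg : Continuous g) :
    (∫ x in a..b, f x * g x)^2 ≤ (∫ x in a..b, (f x)^2) * (∫ x in a..b, (g x)^2) := by
  have h := cs_interval hab hf hg
  have h2f : (0:ℝ) ≤ ∫ x in a..b, (f x)^2 :=
    intervalIntegral.integral_nonneg hab (fun u _ => sq_nonneg _)
  have h2g : (0:ℝ) ≤ ∫ x in a..b, (g x)^2 :=
    intervalIntegral.integral_nonneg hab (fun u _ => sq_nonneg _)
  have := pow_le_pow_left₀ (abs_nonneg _) h 2
  rw [sq_abs] at this
  refine this.trans_eq ?_
  rw [mul_pow, Real.sq_sqrt h2f, Real.sq_sqrt h2g]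

lemma sq_l2_interval {g : ℝ → ℝ} {b : ℝ} (hb : 0 ≤ b) (hg : Continuous g) :
    (∫ x in (0:ℝ)..b, g x)^2 ≤ b * ∫ x in (0:ℝ)..b, (g x)^2 := by
  have h := sq_cs_interval hb (continuous_const (y := (1:ℝ))) hg
  simpa using h



/-- first partial derivative of a function on `ℝ²` -/
noncomputable def pd1 (u : ℝ × ℝ → ℝ) (x : ℝ × ℝ) : ℝ := fderiv ℝ u x (1, 0)

/-- second partial derivative of a function on `ℝ²` -/
noncomputable def pd2 (u : ℝ × ℝ → ℝ) (x : ℝ × ℝ) : ℝ := fderiv ℝ u x (0, 1)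

set_option maxHeartbeats 1000000 in
/-- Estimate (3.7) in the proof of Lemma 3.3 of the paper: the difference
between the oscillatory boundary pairing on the rough boundary and the
homogenized pairing on the flat boundary is of order `√ε`, with constant
depending only on `A = sup |γ'|` and `sup γ`. -/
theorem boundary_homogenization_estimate
    (γ : ℝ → ℝ) (hγ : ContDiff ℝ 1 γ) (hper : ∀ t, γ (t + 1) = γ t)
    (hpos : ∀ t, 0 ≤ γ t)
    (A : ℝ) (hA : IsLUB (Set.range fun t => |deriv γ t|) A) :
    ∃ C > (0:ℝ),
      ∀ g : ℝ → ℝ, Continuous g → (∀ t, g (t + 1) = g t) →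
      ∀ N : ℕ, 0 < N → ∀ ε : ℝ, ε = 1 / (N : ℝ) → (∀ t, ε * γ t ≤ 1) →
      ∀ φ : ℝ × ℝ → ℝ, ∀ U : Set (ℝ × ℝ), IsOpen U →
        Set.Icc (0:ℝ) 1 ×ˢ Set.Icc (0:ℝ) 1 ⊆ U → ContDiffOn ℝ 1 φ U →
      |(∫ x₁ in (0:ℝ)..1,
            (g (x₁ / ε) * Real.sqrt (1 + (deriv γ (x₁ / ε)) ^ 2)) *
              φ (x₁, ε * γ (x₁ / ε))) -
          (∫ t in (0:ℝ)..1, g t * Real.sqrt (1 + (deriv γ t) ^ 2)) *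
            ∫ x₁ in (0:ℝ)..1, φ (x₁, 0)| ≤
        C * Real.sqrt ε *
          Real.sqrt (∫ x₁ in (0:ℝ)..1,
            (g (x₁ / ε)) ^ 2 * Real.sqrt (1 + (deriv γ (x₁ / ε)) ^ 2)) *
          Real.sqrt (∫ x in Set.Ioo (0:ℝ) 1 ×ˢ Set.Ioo (0:ℝ) 1,
            ((φ x) ^ 2 + ((pd1 φ x) ^ 2 + (pd2 φ x) ^ 2))) := by
  classical
  -- facts about γ
  have hγc : Continuous γ := hγ.continuous
  have hdc : Continuous (deriv γ) := hγ.continuous_deriv le_rfl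
  have hperG : Function.Periodic γ 1 := hper
  have hperd : Function.Periodic (deriv γ) 1 := by
    intro t
    have h1 : (fun x => γ (x + 1)) = γ := funext hper
    have h2 := deriv_comp_add_const (f := γ) (a := (1:ℝ)) (x := t)
    rw [h1] at h2
    exact h2.symm
  have hAb : ∀ t, |deriv γ t| ≤ A := fun t => hA.1 ⟨t, rfl⟩
  have hA0 : (0:ℝ) ≤ A := (abs_nonneg _).trans (hAb 0)
  have hK2nn : (0:ℝ) ≤ Real.sqrt (1 + A^2) := Real.sqrt_nonneg _
  have hK2ge1 : (1:ℝ) ≤ Real.sqrt (1 + A^2) := Real.one_le_sqrt.mpr (by nlinarith)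
  have hK2pos : (0:ℝ) < Real.sqrt (1 + A^2) := lt_of_lt_of_le one_pos hK2ge1
  set K2 : ℝ := Real.sqrt (1 + A^2) with hK2def
  have hwle : ∀ t, Real.sqrt (1 + deriv γ t ^ 2) ≤ K2 := by
    intro t
    refine Real.sqrt_le_sqrt ?_
    have h1 := hAb t
    have h2 := abs_nonneg (deriv γ t)
    nlinarith [sq_abs (deriv γ t)]
  have hw0 : ∀ t, (0:ℝ) ≤ Real.sqrt (1 + deriv γ t ^ 2) := fun t => Real.sqrt_nonneg _
  have hw1 : ∀ t, (1:ℝ) ≤ Real.sqrt (1 + deriv γ t ^ 2) := fun t =>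
    Real.one_le_sqrt.mpr (by nlinarith [sq_nonneg (deriv γ t)])
  -- the sup of γ
  have hrange : Set.range γ ⊆ γ '' (Icc 0 1) := by
    rintro _ ⟨t, rfl⟩
    refine ⟨Int.fract t, ⟨Int.fract_nonneg t, (Int.fract_lt_one t).le⟩, ?_⟩
    have h3 : γ (t - (⌊t⌋ : ℤ) * 1) = γ t := hperG.sub_int_mul_eq (n := ⌊t⌋)
    rw [mul_one] at h3
    have h4 : Int.fract t = t - (⌊t⌋ : ℤ) := rfl
    rw [h4]
    exact h3
  have hbddA : BddAbove (Set.range γ) :=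
    (((isCompact_Icc (a := (0:ℝ)) (b := 1)).image_of_continuousOn
      hγc.continuousOn).bddAbove).mono hrange
  set Gm : ℝ := sSup (Set.range γ) with hGmdef
  have hGm : ∀ t, γ t ≤ Gm := fun t => le_csSup hbddA ⟨t, rfl⟩
  have hGm0 : (0:ℝ) ≤ Gm := le_trans (hpos 0) (hGm 0)
  refine ⟨(Real.sqrt Gm + 4) * Real.sqrt K2, by positivity, ?_⟩
  intro g hgc hgper N hN ε hε hεγ φ U hUo hUsub hφ
  -- basic ε facts
  have hNpos : (0:ℝ) < N := Nat.cast_pos.mpr hN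
  have hε0 : (0:ℝ) < ε := by rw [hε]; positivity
  have hεne : ε ≠ 0 := hε0.ne'
  have hNε : (N:ℝ) * ε = 1 := by rw [hε]; field_simp
  have hε1 : ε ≤ 1 := by
    rw [hε, div_le_one hNpos]
    exact_mod_cast hN
  -- the closed square and the clamp map
  set S : Set (ℝ × ℝ) := Icc (0:ℝ) 1 ×ˢ Icc (0:ℝ) 1 with hSdef
  set ψc : ℝ × ℝ → ℝ × ℝ := fun z => (max 0 (min z.1 1), max 0 (min z.2 1)) with hψdef
  have hψcont : Continuous ψc := by
    refine Continuous.prodMk ?_ ?_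
    · exact continuous_const.max (continuous_fst.min continuous_const)
    · exact continuous_const.max (continuous_snd.min continuous_const)
  have hψmem : ∀ z, ψc z ∈ S := by
    intro z
    exact ⟨⟨le_max_left _ _, max_le zero_le_one (min_le_right _ _)⟩,
      ⟨le_max_left _ _, max_le zero_le_one (min_le_right _ _)⟩⟩
  have hψid : ∀ z ∈ S, ψc z = z := by
    rintro ⟨z1, z2⟩ ⟨⟨h1, h2⟩, ⟨h3, h4⟩⟩
    have e1 : max 0 (min z1 1) = z1 := by rw [min_eq_left h2, max_eq_right h1]
    have e2 : max 0 (min z2 1) = z2 := by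
      rw [min_eq_left h4, max_eq_right h3]
    simp only [hψdef, e1, e2]
  have hSU : S ⊆ U := hUsub
  have hdiff : ∀ z ∈ S, DifferentiableAt ℝ φ z := fun z hz =>
    (hφ.differentiableOn one_ne_zero).differentiableAt (hUo.mem_nhds (hSU hz))
  have hφcont : ContinuousOn φ U := hφ.continuousOn
  have hfdc : ContinuousOn (fderiv ℝ φ) U :=
    hφ.continuousOn_fderiv_of_isOpen hUo le_rfl
  set φc : ℝ × ℝ → ℝ := fun z => φ (ψc z) with hφcdef
  set p1c : ℝ × ℝ → ℝ := fun z => pd1 φ (ψc z) with hp1cdef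
  set p2c : ℝ × ℝ → ℝ := fun z => pd2 φ (ψc z) with hp2cdef
  have hφcc : Continuous φc := hφcont.comp_continuous hψcont (fun z => hSU (hψmem z))
  have hp1U : ContinuousOn (pd1 φ) U := by
    unfold pd1
    exact hfdc.clm_apply continuousOn_const
  have hp2U : ContinuousOn (pd2 φ) U := by
    unfold pd2
    exact hfdc.clm_apply continuousOn_const
  have hp1cc : Continuous p1c := hp1U.comp_continuous hψcont (fun z => hSU (hψmem z))
  have hp2cc : Continuous p2c := hp2U.comp_continuous hψcont (fun z => hSU (hψmem z))
  -- one–dimensional objects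
  set p : ℝ → ℝ := fun t => g t * Real.sqrt (1 + deriv γ t ^ 2) with hpdef
  have hpc : Continuous p := hgc.mul ((continuous_const.add (hdc.pow 2)).sqrt)
  have hpper : Function.Periodic p 1 := by
    intro t
    simp only [hpdef, hgper t, hperd t]
  set P : ℝ := ∫ t in (0:ℝ)..1, p t with hPdef
  set pe : ℝ → ℝ := fun x => p (x / ε) with hpedef
  have hpec : Continuous pe := hpc.comp (continuous_id.div_const ε)
  set q : ℝ → ℝ := fun x => pe x - P with hqdef
  have hqc : Continuous q := hpec.sub continuous_const
  set Qf : ℝ → ℝ := fun x => ∫ s in (0:ℝ)..x, q s with hQfdef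
  have hQfc : Continuous Qf :=
    intervalIntegral.continuous_primitive (μ := volume) (fun a b => hqc.intervalIntegrable a b) 0
  set M2 : ℝ := ∫ t in (0:ℝ)..1, (g t)^2 * Real.sqrt (1 + deriv γ t ^ 2) with hM2def
  set D2 : ℝ := ∫ z in Ioo (0:ℝ) 1 ×ˢ Ioo (0:ℝ) 1,
    ((φc z)^2 + ((p1c z)^2 + (p2c z)^2)) with hD2def
  -- scaling identities
  have hP1 : ∫ x in (0:ℝ)..1, pe x = P := scale_int hpc hpper hN hε
  have hpe2 : ∫ x in (0:ℝ)..1, (pe x)^2 = ∫ t in (0:ℝ)..1, (p t)^2 :=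
    scale_int (hpc.pow 2) (fun t => by simp only [Pi.pow_apply, hpper t]) hN hε
  have hM2e : (∫ x₁ in (0:ℝ)..1,
      (g (x₁ / ε)) ^ 2 * Real.sqrt (1 + (deriv γ (x₁ / ε)) ^ 2)) = M2 :=
    scale_int ((hgc.pow 2).mul ((continuous_const.add (hdc.pow 2)).sqrt))
      (fun t => by simp only [Pi.mul_apply, Pi.pow_apply, Pi.add_apply, hgper t, hperd t]) hN hε
  have hM2nn : 0 ≤ M2 :=
    intervalIntegral.integral_nonneg zero_le_one (fun t _ => by positivity)
  have hD2nn : 0 ≤ D2 :=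
    setIntegral_nonneg (measurableSet_Ioo.prod measurableSet_Ioo) (fun z _ => by positivity)
  have hp2le : ∫ t in (0:ℝ)..1, (p t)^2 ≤ K2 * M2 := by
    rw [hM2def, ← intervalIntegral.integral_const_mul]
    refine intervalIntegral.integral_mono_on zero_le_one
      ((hpc.pow 2).intervalIntegrable _ _)
      ((continuous_const.mul ((hgc.pow 2).mul
        ((continuous_const.add (hdc.pow 2)).sqrt))).intervalIntegrable _ _)
      (fun t _ => ?_)
    have h1 := hwle t
    have h2 := hw0 t
    have h3 := sq_nonneg (g t)
    have h5 := mul_le_mul_of_nonneg_left (mul_le_mul_of_nonneg_right h1 h2) h3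
    simp only [hpdef]
    nlinarith [h5]
  have hpe2le : ∫ x in (0:ℝ)..1, (pe x)^2 ≤ K2 * M2 := by rw [hpe2]; exact hp2le
  -- q is ε-periodic with zero average
  have hqper : Function.Periodic q ε := by
    intro x
    have hx : (x + ε) / ε = x / ε + 1 := by field_simp
    simp only [hqdef, hpedef, hx, hpper (x/ε)]
  have hq0 : ∫ s in (0:ℝ)..ε, q s = 0 := by
    have h1 : ∫ s in (0:ℝ)..ε, pe s = ε * P := by
      rw [hpedef]
      rw [intervalIntegral.integral_comp_div (f := p) hεne]
      rw [zero_div, div_self hεne, smul_eq_mul, hPdef]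
    have h2 : ∫ s in (0:ℝ)..ε, q s = (∫ s in (0:ℝ)..ε, pe s) - ∫ s in (0:ℝ)..ε, P :=
      intervalIntegral.integral_sub (hpec.intervalIntegrable _ _) intervalIntegrable_const
    rw [h2, h1, intervalIntegral.integral_const, smul_eq_mul]
    ring
  have hQf0 : Qf 0 = 0 := by simp [hQfdef]
  have hQf1 : Qf 1 = 0 := by
    have h2 : Qf 1 = (∫ x in (0:ℝ)..1, pe x) - ∫ x in (0:ℝ)..1, P := by
      rw [hQfdef]
      exact intervalIntegral.integral_sub (hpec.intervalIntegrable _ _) intervalIntegrable_const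
    rw [h2, hP1, intervalIntegral.integral_const, smul_eq_mul]
    ring
  have hQper : Function.Periodic Qf ε := by
    intro x
    have hadd := intervalIntegral.integral_add_adjacent_intervals (μ := volume)
      (hqc.intervalIntegrable 0 x) (hqc.intervalIntegrable x (x + ε))
    have hcell : ∫ s in x..(x + ε), q s = ∫ s in (0:ℝ)..(0 + ε), q s :=
      hqper.intervalIntegral_add_eq x 0
    rw [zero_add, hq0] at hcell
    simp only [hQfdef]
    rw [← hadd, hcell, add_zero]
  have hsplit1 : ∀ {h : ℝ → ℝ}, Continuous h → Function.Periodic h ε →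
      (∫ x in (0:ℝ)..1, h x) = N * ∫ x in (0:ℝ)..ε, h x := by
    intro h hc hp
    have h2 := per_split hc hp N
    rwa [hNε] at h2
  -- L² bounds on q and Qf
  have hq2le : ∫ x in (0:ℝ)..1, (q x)^2 ≤ K2 * M2 := by
    have hexp : EqOn (fun x => (q x)^2) (fun x => ((pe x)^2 - (2*P) * pe x) + P^2)
        (uIcc (0:ℝ) 1) := by
      intro x _
      simp only [hqdef]
      ring
    rw [intervalIntegral.integral_congr hexp,
      intervalIntegral.integral_add (f := fun x => (pe x)^2 - (2*P) * pe x) (g := fun _ => P^2) (((hpec.pow 2).sub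
        (continuous_const.mul hpec)).intervalIntegrable _ _) intervalIntegrable_const,
      intervalIntegral.integral_sub (f := fun x => (pe x)^2) (g := fun x => (2*P) * pe x) ((hpec.pow 2).intervalIntegrable _ _)
        ((continuous_const.mul hpec).intervalIntegrable _ _),
      intervalIntegral.integral_const_mul, hP1, intervalIntegral.integral_const]
    simp only [smul_eq_mul]
    nlinarith [sq_nonneg P, hpe2le]
  have hq2nn : (0:ℝ) ≤ ∫ s in (0:ℝ)..ε, (q s)^2 :=
    intervalIntegral.integral_nonneg hε0.le (fun s _ => sq_nonneg _)
  have hq2int : (∫ x in (0:ℝ)..1, (q x)^2) = N * ∫ s in (0:ℝ)..ε, (q s)^2 :=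
    hsplit1 (hqc.pow 2) (fun x => by simp only [hqper x])
  have hq2nn' : (0:ℝ) ≤ ∫ x in (0:ℝ)..1, (q x)^2 :=
    intervalIntegral.integral_nonneg zero_le_one (fun s _ => sq_nonneg _)
  have hQbound : ∀ x ∈ Icc (0:ℝ) ε, (Qf x)^2 ≤ ε * ∫ s in (0:ℝ)..ε, (q s)^2 := by
    intro x hx
    have h1 : (Qf x)^2 ≤ x * ∫ s in (0:ℝ)..x, (q s)^2 := sq_l2_interval hx.1 hqc
    refine h1.trans ?_
    have h2 : ∫ s in (0:ℝ)..x, (q s)^2 ≤ ∫ s in (0:ℝ)..ε, (q s)^2 :=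
      intervalIntegral.integral_mono_interval le_rfl hx.1 hx.2
        (ae_of_all _ fun s => sq_nonneg _) ((hqc.pow 2).intervalIntegrable _ _)
    have h3 : 0 ≤ ∫ s in (0:ℝ)..x, (q s)^2 :=
      intervalIntegral.integral_nonneg hx.1 (fun s _ => sq_nonneg _)
    exact mul_le_mul hx.2 h2 h3 hε0.le
  have hQL2 : ∫ x in (0:ℝ)..1, (Qf x)^2 ≤ ε^2 * ∫ x in (0:ℝ)..1, (q x)^2 := by
    have hQint : (∫ x in (0:ℝ)..1, (Qf x)^2) = N * ∫ x in (0:ℝ)..ε, (Qf x)^2 :=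
      hsplit1 (hQfc.pow 2) (fun x => by simp only [hQper x])
    have h4 : ∫ x in (0:ℝ)..ε, (Qf x)^2 ≤
        ∫ _x in (0:ℝ)..ε, (ε * ∫ s in (0:ℝ)..ε, (q s)^2) :=
      intervalIntegral.integral_mono_on hε0.le ((hQfc.pow 2).intervalIntegrable _ _)
        intervalIntegrable_const hQbound
    rw [intervalIntegral.integral_const, smul_eq_mul] at h4
    rw [hQint, hq2int]
    calc (N:ℝ) * ∫ x in (0:ℝ)..ε, (Qf x)^2
        ≤ N * ((ε - 0) * (ε * ∫ s in (0:ℝ)..ε, (q s)^2)) :=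
          mul_le_mul_of_nonneg_left h4 hNpos.le
      _ = ε^2 * ((N:ℝ) * ∫ s in (0:ℝ)..ε, (q s)^2) := by ring
  have hQ2nn : (0:ℝ) ≤ ∫ x in (0:ℝ)..1, (Qf x)^2 :=
    intervalIntegral.integral_nonneg zero_le_one (fun s _ => sq_nonneg _)
  -- derivatives of φ along lines
  have hvert : ∀ x ∈ Icc (0:ℝ) 1, ∀ t ∈ Icc (0:ℝ) 1,
      HasDerivAt (fun r => φ (x, r)) (p2c (x, t)) t := by
    intro x hx t ht
    have hmem : ((x, t) : ℝ × ℝ) ∈ S := ⟨hx, ht⟩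
    have hd : DifferentiableAt ℝ φ (x, t) := hdiff _ hmem
    have hline : HasDerivAt (fun r : ℝ => ((x, r) : ℝ × ℝ)) (0, 1) t :=
      (hasDerivAt_const t x).prodMk (hasDerivAt_id t)
    have hcomp := hd.hasFDerivAt.comp_hasDerivAt t hline
    have hpeq : p2c (x, t) = fderiv ℝ φ (x, t) (0, 1) := by
      simp only [hp2cdef]
      rw [hψid _ hmem]
      rfl
    rw [hpeq]
    exact hcomp
  have hhoriz : ∀ s ∈ Icc (0:ℝ) 1, ∀ x ∈ Icc (0:ℝ) 1,
      HasDerivAt (fun r => φ (r, s)) (p1c (x, s)) x := by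
    intro s hs x hx
    have hmem : ((x, s) : ℝ × ℝ) ∈ S := ⟨hx, hs⟩
    have hd : DifferentiableAt ℝ φ (x, s) := hdiff _ hmem
    have hline : HasDerivAt (fun r : ℝ => ((r, s) : ℝ × ℝ)) (1, 0) x :=
      (hasDerivAt_id x).prodMk (hasDerivAt_const x s)
    have hcomp := hd.hasFDerivAt.comp_hasDerivAt x hline
    have hpeq : p1c (x, s) = fderiv ℝ φ (x, s) (1, 0) := by
      simp only [hp1cdef]
      rw [hψid _ hmem]
      rfl
    rw [hpeq]
    exact hcomp
  have hφeq : ∀ z ∈ S, φc z = φ z := fun z hz => by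
    simp only [hφcdef]; rw [hψid _ hz]
  have hFTC : ∀ x ∈ Icc (0:ℝ) 1, ∀ b : ℝ, 0 ≤ b → b ≤ 1 →
      φc (x, b) - φc (x, 0) = ∫ t in (0:ℝ)..b, p2c (x, t) := by
    intro x hx b hb0 hb1
    have h1 : ∫ t in (0:ℝ)..b, p2c (x, t) = φ (x, b) - φ (x, 0) := by
      refine intervalIntegral.integral_eq_sub_of_hasDerivAt (f := fun r => φ (x, r)) (fun t ht => ?_) ?_
      · rw [uIcc_of_le hb0] at ht
        exact hvert x hx t ⟨ht.1, ht.2.trans hb1⟩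
      · exact (hp2cc.comp (continuous_const.prodMk continuous_id)).intervalIntegrable _ _
    rw [hφeq _ ⟨hx, hb0, hb1⟩, hφeq _ ⟨hx, le_refl (0:ℝ), zero_le_one⟩, h1]
  -- the vertical energy function
  set F2 : ℝ → ℝ := fun x => ∫ t in (0:ℝ)..1, (p2c (x, t))^2 with hF2def
  have hF2c : Continuous F2 := by
    refine intervalIntegral.continuous_parametric_intervalIntegral_of_continuous'
      (μ := volume) ?_ 0 1
    exact (hp2cc.pow 2)
  have hF2nn : ∀ x, 0 ≤ F2 x := fun x =>
    intervalIntegral.integral_nonneg zero_le_one (fun t _ => sq_nonneg _)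
  have hIF2 : ∫ x in (0:ℝ)..1, F2 x = ∫ z in Ioo (0:ℝ) 1 ×ˢ Ioo (0:ℝ) 1, (p2c z)^2 := by
    simp only [hF2def]
    exact (prod_II (hp2cc.pow 2) zero_le_one zero_le_one).symm
  have hD2p2 : ∫ z in Ioo (0:ℝ) 1 ×ˢ Ioo (0:ℝ) 1, (p2c z)^2 ≤ D2 := by
    rw [hD2def]
    refine setIntegral_mono_on
      (integrableOn_prod_cont (hp2cc.pow 2) Ioo_subset_Icc_self Ioo_subset_Icc_self)
      (integrableOn_prod_cont ((hφcc.pow 2).add ((hp1cc.pow 2).add (hp2cc.pow 2)))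
        Ioo_subset_Icc_self Ioo_subset_Icc_self)
      (measurableSet_Ioo.prod measurableSet_Ioo)
      (fun z _ => by nlinarith [sq_nonneg (φc z), sq_nonneg (p1c z)])
  have hD2p1 : ∫ z in Ioo (0:ℝ) 1 ×ˢ Ioo (0:ℝ) 1, (p1c z)^2 ≤ D2 := by
    rw [hD2def]
    refine setIntegral_mono_on
      (integrableOn_prod_cont (hp1cc.pow 2) Ioo_subset_Icc_self Ioo_subset_Icc_self)
      (integrableOn_prod_cont ((hφcc.pow 2).add ((hp1cc.pow 2).add (hp2cc.pow 2)))
        Ioo_subset_Icc_self Ioo_subset_Icc_self)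
      (measurableSet_Ioo.prod measurableSet_Ioo)
      (fun z _ => by nlinarith [sq_nonneg (φc z), sq_nonneg (p2c z)])
  -- the boundary-layer difference and the bound on I₁
  set df : ℝ → ℝ := fun x => φc (x, ε * γ (x / ε)) - φc (x, 0) with hdfdef
  have hdfc : Continuous df := by
    refine Continuous.sub ?_ ?_
    · exact hφcc.comp (continuous_id.prodMk
        (continuous_const.mul (hγc.comp (continuous_id.div_const ε))))
    · exact hφcc.comp (continuous_id.prodMk continuous_const)
  have hdb : ∀ x ∈ Icc (0:ℝ) 1, (df x)^2 ≤ (ε * Gm) * F2 x := by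
    intro x hx
    have hb0 : 0 ≤ ε * γ (x / ε) := mul_nonneg hε0.le (hpos _)
    have hb1 : ε * γ (x / ε) ≤ 1 := hεγ _
    have h1 : df x = ∫ t in (0:ℝ)..(ε * γ (x / ε)), p2c (x, t) := by
      simp only [hdfdef]
      exact hFTC x hx _ hb0 hb1
    rw [h1]
    have h2 := sq_l2_interval (g := fun t => p2c (x, t)) hb0
      (hp2cc.comp (continuous_const.prodMk continuous_id))
    refine h2.trans ?_
    have h3 : ∫ t in (0:ℝ)..(ε * γ (x / ε)), (p2c (x, t))^2 ≤ F2 x := by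
      simp only [hF2def]
      exact intervalIntegral.integral_mono_interval le_rfl hb0 hb1
        (ae_of_all _ fun t => sq_nonneg _)
        (((hp2cc.comp (continuous_const.prodMk continuous_id)).pow 2).intervalIntegrable _ _)
    have h4 : 0 ≤ ∫ t in (0:ℝ)..(ε * γ (x / ε)), (p2c (x, t))^2 :=
      intervalIntegral.integral_nonneg hb0 (fun t _ => sq_nonneg _)
    exact mul_le_mul (mul_le_mul_of_nonneg_left (hGm _) hε0.le) h3 h4 (by positivity)
  have hI1 : |∫ x in (0:ℝ)..1, pe x * df x| ≤
      Real.sqrt (K2 * M2) * Real.sqrt ((ε * Gm) * D2) := by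
    refine (cs_interval zero_le_one hpec hdfc).trans ?_
    refine mul_le_mul (Real.sqrt_le_sqrt hpe2le) (Real.sqrt_le_sqrt ?_)
      (Real.sqrt_nonneg _) (Real.sqrt_nonneg _)
    have h5 : ∫ x in (0:ℝ)..1, (df x)^2 ≤ ∫ x in (0:ℝ)..1, (ε * Gm) * F2 x :=
      intervalIntegral.integral_mono_on zero_le_one ((hdfc.pow 2).intervalIntegrable _ _)
        ((continuous_const.mul hF2c).intervalIntegrable _ _) hdb
    rw [intervalIntegral.integral_const_mul, hIF2] at h5
    refine h5.trans ?_
    exact mul_le_mul_of_nonneg_left hD2p2 (by positivity)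
  -- vertical averages
  set Φf : ℝ → ℝ := fun x => ε⁻¹ * ∫ s in (0:ℝ)..ε, φc (x, s) with hΦdef
  have hΦc : Continuous Φf := by
    refine continuous_const.mul ?_
    refine intervalIntegral.continuous_parametric_intervalIntegral_of_continuous'
      (μ := volume) ?_ 0 ε
    exact hφcc
  set Rf : ℝ → ℝ := fun x => ε⁻¹ * ∫ s in (0:ℝ)..ε, (φc (x, s) - φc (x, 0)) with hRdef
  have hRc : Continuous Rf := by
    refine continuous_const.mul ?_
    refine intervalIntegral.continuous_parametric_intervalIntegral_of_continuous'
      (μ := volume) ?_ 0 ε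
    exact hφcc.sub (hφcc.comp (continuous_fst.prodMk continuous_const))
  have hptΦR : ∀ x, φc (x, 0) = Φf x - Rf x := by
    intro x
    have hsub : ∫ s in (0:ℝ)..ε, (φc (x, s) - φc (x, 0))
        = (∫ s in (0:ℝ)..ε, φc (x, s)) - ∫ s in (0:ℝ)..ε, φc (x, 0) :=
      intervalIntegral.integral_sub
        ((hφcc.comp (continuous_const.prodMk continuous_id)).intervalIntegrable _ _)
        intervalIntegrable_const
    simp only [hΦdef, hRdef]
    rw [hsub, intervalIntegral.integral_const, smul_eq_mul]
    field_simp
    ring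
  -- the bound on the R–term
  have hRb : ∀ x ∈ Icc (0:ℝ) 1, (Rf x)^2 ≤ ε * F2 x := by
    intro x hx
    have hptw : ∀ s ∈ Icc (0:ℝ) ε,
        |φc (x, s) - φc (x, 0)| ≤ Real.sqrt ε * Real.sqrt (F2 x) := by
      intro s hs
      rw [hFTC x hx s hs.1 (hs.2.trans hε1)]
      refine (l2_interval hs.1 (hp2cc.comp (continuous_const.prodMk continuous_id))).trans ?_
      refine mul_le_mul (Real.sqrt_le_sqrt hs.2) (Real.sqrt_le_sqrt ?_)
        (Real.sqrt_nonneg _) (Real.sqrt_nonneg _)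
      simp only [hF2def]
      exact intervalIntegral.integral_mono_interval le_rfl hs.1 (hs.2.trans hε1)
        (ae_of_all _ fun t => sq_nonneg _)
        (((hp2cc.comp (continuous_const.prodMk continuous_id)).pow 2).intervalIntegrable _ _)
    have habs : |∫ s in (0:ℝ)..ε, (φc (x, s) - φc (x, 0))|
        ≤ ε * (Real.sqrt ε * Real.sqrt (F2 x)) := by
      refine (intervalIntegral.abs_integral_le_integral_abs hε0.le).trans ?_
      have h6 := intervalIntegral.integral_mono_on (μ := volume) hε0.le
        (((hφcc.comp (continuous_const.prodMk continuous_id)).sub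
          continuous_const).abs.intervalIntegrable 0 ε)
        intervalIntegrable_const hptw
      rwa [intervalIntegral.integral_const, smul_eq_mul, sub_zero] at h6
    have hRabs : |Rf x| ≤ Real.sqrt ε * Real.sqrt (F2 x) := by
      simp only [hRdef]
      rw [abs_mul, abs_inv, abs_of_pos hε0]
      calc ε⁻¹ * |∫ s in (0:ℝ)..ε, (φc (x, s) - φc (x, 0))|
          ≤ ε⁻¹ * (ε * (Real.sqrt ε * Real.sqrt (F2 x))) :=
            mul_le_mul_of_nonneg_left habs (by positivity)
        _ = Real.sqrt ε * Real.sqrt (F2 x) := by field_simp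
    calc (Rf x)^2 = |Rf x|^2 := (sq_abs _).symm
      _ ≤ (Real.sqrt ε * Real.sqrt (F2 x))^2 := pow_le_pow_left₀ (abs_nonneg _) hRabs 2
      _ = ε * F2 x := by rw [mul_pow, Real.sq_sqrt hε0.le, Real.sq_sqrt (hF2nn x)]
  have hqR : |∫ x in (0:ℝ)..1, q x * Rf x| ≤
      Real.sqrt (K2 * M2) * Real.sqrt (ε * D2) := by
    refine (cs_interval zero_le_one hqc hRc).trans ?_
    refine mul_le_mul (Real.sqrt_le_sqrt hq2le) (Real.sqrt_le_sqrt ?_)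
      (Real.sqrt_nonneg _) (Real.sqrt_nonneg _)
    have h5 : ∫ x in (0:ℝ)..1, (Rf x)^2 ≤ ∫ x in (0:ℝ)..1, ε * F2 x :=
      intervalIntegral.integral_mono_on zero_le_one ((hRc.pow 2).intervalIntegrable _ _)
        ((continuous_const.mul hF2c).intervalIntegrable _ _) hRb
    rw [intervalIntegral.integral_const_mul, hIF2] at h5
    exact h5.trans (mul_le_mul_of_nonneg_left hD2p2 hε0.le)
  -- integration by parts in the horizontal variable
  have hQD : ∀ x : ℝ, HasDerivAt Qf (q x) x := fun x =>
    intervalIntegral.integral_hasDerivAt_right (hqc.intervalIntegrable _ _)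
      (hqc.stronglyMeasurableAtFilter _ _) hqc.continuousAt
  set J : ℝ → ℝ := fun s => ∫ x in (0:ℝ)..1, Qf x * p1c (x, s) with hJdef
  have hJc : Continuous J := by
    refine intervalIntegral.continuous_parametric_intervalIntegral_of_continuous'
      (μ := volume) ?_ 0 1
    exact (hQfc.comp continuous_snd).mul (hp1cc.comp (continuous_snd.prodMk continuous_fst))
  have hIBP : ∀ s ∈ Icc (0:ℝ) 1, (∫ x in (0:ℝ)..1, q x * φc (x, s)) = - J s := by
    intro s hs
    have hform := intervalIntegral.integral_mul_deriv_eq_deriv_mul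
      (u := fun x => φ (x, s)) (u' := fun x => p1c (x, s)) (v := Qf) (v' := q)
      (a := (0:ℝ)) (b := 1)
      (fun x hx => hhoriz s hs x (by rwa [uIcc_of_le zero_le_one] at hx))
      (fun x _ => hQD x)
      ((hp1cc.comp (continuous_id.prodMk continuous_const)).intervalIntegrable _ _)
      (hqc.intervalIntegrable _ _)
    rw [hQf1, hQf0, mul_zero, mul_zero, sub_zero, zero_sub] at hform
    have hL : ∫ x in (0:ℝ)..1, q x * φc (x, s) = ∫ x in (0:ℝ)..1, φ (x, s) * q x := by
      refine intervalIntegral.integral_congr (fun x hx => ?_)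
      rw [uIcc_of_le zero_le_one] at hx
      show q x * φc (x, s) = φ (x, s) * q x
      rw [hφeq (x, s) ⟨hx, hs⟩]
      ring
    have hRJ : J s = ∫ x in (0:ℝ)..1, p1c (x, s) * Qf x := by
      simp only [hJdef]
      refine intervalIntegral.integral_congr (fun x hx => ?_)
      show Qf x * p1c (x, s) = p1c (x, s) * Qf x
      ring
    rw [hL, hform, hRJ]
  -- the bound on the Φ–term
  have hqΦ : |∫ x in (0:ℝ)..1, q x * Φf x| ≤
      Real.sqrt ε * (Real.sqrt (K2 * M2) * Real.sqrt D2) := by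
    have e1 : ∫ x in (0:ℝ)..1, q x * Φf x
        = ε⁻¹ * ∫ x in (0:ℝ)..1, (∫ s in (0:ℝ)..ε, q x * φc (x, s)) := by
      rw [← intervalIntegral.integral_const_mul]
      refine intervalIntegral.integral_congr (fun x hx => ?_)
      simp only [hΦdef]
      rw [intervalIntegral.integral_const_mul]
      ring
    have e2 : ∫ x in (0:ℝ)..1, (∫ s in (0:ℝ)..ε, q x * φc (x, s))
        = ∫ s in (0:ℝ)..ε, (∫ x in (0:ℝ)..1, q x * φc (x, s)) :=
      swap_II (f := fun z => q z.1 * φc z) ((hqc.comp continuous_fst).mul hφcc)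
        zero_le_one hε0.le
    have e3 : ∫ s in (0:ℝ)..ε, (∫ x in (0:ℝ)..1, q x * φc (x, s))
        = ∫ s in (0:ℝ)..ε, (- J s) := by
      refine intervalIntegral.integral_congr (fun s hs => ?_)
      rw [uIcc_of_le hε0.le] at hs
      exact hIBP s ⟨hs.1, hs.2.trans hε1⟩
    have e4 : |∫ s in (0:ℝ)..ε, J s| ≤
        Real.sqrt ε * Real.sqrt (∫ s in (0:ℝ)..ε, (J s)^2) := l2_interval hε0.le hJc
    have hGc : Continuous (fun s => ∫ x in (0:ℝ)..1, (p1c (x, s))^2) := by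
      refine intervalIntegral.continuous_parametric_intervalIntegral_of_continuous'
        (μ := volume) ?_ 0 1
      exact (hp1cc.comp (continuous_snd.prodMk continuous_fst)).pow 2
    have e5 : ∫ s in (0:ℝ)..ε, (J s)^2 ≤
        (∫ x in (0:ℝ)..1, (Qf x)^2) * ∫ s in (0:ℝ)..ε, (∫ x in (0:ℝ)..1, (p1c (x, s))^2) := by
      rw [← intervalIntegral.integral_const_mul]
      refine intervalIntegral.integral_mono_on hε0.le ((hJc.pow 2).intervalIntegrable _ _)
        ((continuous_const.mul hGc).intervalIntegrable _ _) (fun s hs => ?_)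
      simp only [hJdef]
      exact sq_cs_interval (g := fun x => p1c (x, s)) zero_le_one hQfc
        (hp1cc.comp (continuous_id.prodMk continuous_const))
    have e6 : ∫ s in (0:ℝ)..ε, (∫ x in (0:ℝ)..1, (p1c (x, s))^2)
        = ∫ x in (0:ℝ)..1, (∫ s in (0:ℝ)..ε, (p1c (x, s))^2) :=
      swap_II (f := fun z => (p1c (z.2, z.1))^2)
        ((hp1cc.comp (continuous_snd.prodMk continuous_fst)).pow 2) hε0.le zero_le_one
    have e7 : ∫ x in (0:ℝ)..1, (∫ s in (0:ℝ)..ε, (p1c (x, s))^2)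
        = ∫ z in Ioo (0:ℝ) 1 ×ˢ Ioo (0:ℝ) ε, (p1c z)^2 :=
      (prod_II (hp1cc.pow 2) zero_le_one hε0.le).symm
    have e8 : ∫ z in Ioo (0:ℝ) 1 ×ˢ Ioo (0:ℝ) ε, (p1c z)^2 ≤
        ∫ z in Ioo (0:ℝ) 1 ×ˢ Ioo (0:ℝ) 1, (p1c z)^2 :=
      setIntegral_mono_set
        (integrableOn_prod_cont (hp1cc.pow 2) Ioo_subset_Icc_self Ioo_subset_Icc_self)
        (ae_of_all _ fun z => sq_nonneg _)
        (HasSubset.Subset.eventuallyLE (prod_mono subset_rfl (Ioo_subset_Ioo le_rfl hε1)))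
    have e9 : ∫ s in (0:ℝ)..ε, (J s)^2 ≤ (ε^2 * (K2 * M2)) * D2 := by
      refine e5.trans ?_
      have hXle : ∫ s in (0:ℝ)..ε, (∫ x in (0:ℝ)..1, (p1c (x, s))^2) ≤ D2 := by
        rw [e6, e7]
        exact e8.trans hD2p1
      have hXnn : 0 ≤ ∫ s in (0:ℝ)..ε, (∫ x in (0:ℝ)..1, (p1c (x, s))^2) := by
        rw [e6, e7]
        exact setIntegral_nonneg (measurableSet_Ioo.prod measurableSet_Ioo)
          (fun z _ => sq_nonneg _)
      have hQle : ∫ x in (0:ℝ)..1, (Qf x)^2 ≤ ε^2 * (K2 * M2) :=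
        hQL2.trans (mul_le_mul_of_nonneg_left hq2le (sq_nonneg ε))
      exact mul_le_mul hQle hXle hXnn (by positivity)
    have habs2 : |∫ x in (0:ℝ)..1, q x * Φf x| = ε⁻¹ * |∫ s in (0:ℝ)..ε, J s| := by
      rw [e1, e2, e3, abs_mul, abs_inv, abs_of_pos hε0,
        intervalIntegral.integral_neg, abs_neg]
    rw [habs2]
    have e10 : Real.sqrt (∫ s in (0:ℝ)..ε, (J s)^2)
        ≤ ε * (Real.sqrt (K2 * M2) * Real.sqrt D2) := by
      refine (Real.sqrt_le_sqrt e9).trans_eq ?_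
      rw [Real.sqrt_mul (by positivity : (0:ℝ) ≤ ε^2 * (K2 * M2)),
        Real.sqrt_mul (sq_nonneg ε), Real.sqrt_sq hε0.le]
      ring
    calc ε⁻¹ * |∫ s in (0:ℝ)..ε, J s|
        ≤ ε⁻¹ * (Real.sqrt ε * (ε * (Real.sqrt (K2 * M2) * Real.sqrt D2))) := by
          refine mul_le_mul_of_nonneg_left (e4.trans ?_) (by positivity)
          exact mul_le_mul_of_nonneg_left e10 (Real.sqrt_nonneg _)
      _ = Real.sqrt ε * (Real.sqrt (K2 * M2) * Real.sqrt D2) := by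
          field_simp
  -- splitting the difference
  have hφ0c : Continuous (fun x : ℝ => φc (x, 0)) :=
    hφcc.comp (continuous_id.prodMk continuous_const)
  have hsplit : (∫ x in (0:ℝ)..1, pe x * φc (x, ε * γ (x / ε))) -
      P * ∫ x in (0:ℝ)..1, φc (x, 0)
      = (∫ x in (0:ℝ)..1, pe x * df x) +
        ((∫ x in (0:ℝ)..1, q x * Φf x) - ∫ x in (0:ℝ)..1, q x * Rf x) := by
    have h1 : ∫ x in (0:ℝ)..1, pe x * φc (x, ε * γ (x / ε))
        = (∫ x in (0:ℝ)..1, pe x * df x) + ∫ x in (0:ℝ)..1, pe x * φc (x, 0) := by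
      rw [← intervalIntegral.integral_add (f := fun x => pe x * df x) (g := fun x => pe x * φc (x, 0)) ((hpec.mul hdfc).intervalIntegrable _ _)
        ((hpec.mul hφ0c).intervalIntegrable _ _)]
      refine intervalIntegral.integral_congr (fun x hx => ?_)
      show pe x * φc (x, ε * γ (x / ε)) = pe x * df x + pe x * φc (x, 0)
      simp only [hdfdef]
      ring
    have h2 : ∫ x in (0:ℝ)..1, q x * φc (x, 0)
        = (∫ x in (0:ℝ)..1, pe x * φc (x, 0)) - P * ∫ x in (0:ℝ)..1, φc (x, 0) := by
      rw [← intervalIntegral.integral_const_mul,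
        ← intervalIntegral.integral_sub (f := fun x => pe x * φc (x, 0)) (g := fun x => P * φc (x, 0)) ((hpec.mul hφ0c).intervalIntegrable _ _)
          ((continuous_const.mul hφ0c).intervalIntegrable _ _)]
      refine intervalIntegral.integral_congr (fun x hx => ?_)
      show q x * φc (x, 0) = pe x * φc (x, 0) - P * φc (x, 0)
      simp only [hqdef]
      ring
    have h3 : ∫ x in (0:ℝ)..1, q x * φc (x, 0)
        = (∫ x in (0:ℝ)..1, q x * Φf x) - ∫ x in (0:ℝ)..1, q x * Rf x := by
      rw [← intervalIntegral.integral_sub (f := fun x => q x * Φf x) (g := fun x => q x * Rf x) ((hqc.mul hΦc).intervalIntegrable _ _)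
        ((hqc.mul hRc).intervalIntegrable _ _)]
      refine intervalIntegral.integral_congr (fun x hx => ?_)
      show q x * φc (x, 0) = q x * Φf x - q x * Rf x
      rw [hptΦR x]
      ring
    rw [h1]
    linarith [h2, h3]
  -- rewriting the goal
  have egoal1 : (∫ x₁ in (0:ℝ)..1, (g (x₁ / ε) * Real.sqrt (1 + (deriv γ (x₁ / ε)) ^ 2)) *
      φ (x₁, ε * γ (x₁ / ε))) = ∫ x in (0:ℝ)..1, pe x * φc (x, ε * γ (x / ε)) := by
    refine intervalIntegral.integral_congr (fun x hx => ?_)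
    rw [uIcc_of_le zero_le_one] at hx
    show g (x / ε) * Real.sqrt (1 + deriv γ (x / ε) ^ 2) * φ (x, ε * γ (x / ε))
      = pe x * φc (x, ε * γ (x / ε))
    rw [hφeq (x, ε * γ (x / ε)) ⟨hx, ⟨mul_nonneg hε0.le (hpos _), hεγ _⟩⟩]
  have egoal2 : (∫ x₁ in (0:ℝ)..1, φ (x₁, 0)) = ∫ x in (0:ℝ)..1, φc (x, 0) := by
    refine intervalIntegral.integral_congr (fun x hx => ?_)
    rw [uIcc_of_le zero_le_one] at hx
    show φ (x, 0) = φc (x, 0)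
    rw [hφeq (x, 0) ⟨hx, ⟨le_refl (0:ℝ), zero_le_one⟩⟩]
  have egoal3 : (∫ x in Ioo (0:ℝ) 1 ×ˢ Ioo (0:ℝ) 1,
      ((φ x)^2 + ((pd1 φ x)^2 + (pd2 φ x)^2))) = D2 := by
    rw [hD2def]
    refine setIntegral_congr_fun (measurableSet_Ioo.prod measurableSet_Ioo) (fun z hz => ?_)
    have hzS : z ∈ S := ⟨Ioo_subset_Icc_self hz.1, Ioo_subset_Icc_self hz.2⟩
    simp only [hφcdef, hp1cdef, hp2cdef, hψid _ hzS]
  rw [egoal1, egoal2, hM2e, egoal3]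
  have hfin : Real.sqrt (K2 * M2) * Real.sqrt ((ε * Gm) * D2)
      + (Real.sqrt ε * (Real.sqrt (K2 * M2) * Real.sqrt D2)
        + Real.sqrt (K2 * M2) * Real.sqrt (ε * D2))
      ≤ (Real.sqrt Gm + 4) * Real.sqrt K2 * Real.sqrt ε * Real.sqrt M2 * Real.sqrt D2 := by
    simp only [Real.sqrt_mul hK2nn, Real.sqrt_mul (mul_nonneg hε0.le hGm0),
      Real.sqrt_mul hε0.le]
    calc Real.sqrt K2 * Real.sqrt M2 * (Real.sqrt ε * Real.sqrt Gm * Real.sqrt D2)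
          + (Real.sqrt ε * (Real.sqrt K2 * Real.sqrt M2 * Real.sqrt D2)
            + Real.sqrt K2 * Real.sqrt M2 * (Real.sqrt ε * Real.sqrt D2))
        = (Real.sqrt Gm + 2) *
            (Real.sqrt K2 * Real.sqrt ε * Real.sqrt M2 * Real.sqrt D2) := by ring
      _ ≤ (Real.sqrt Gm + 4) *
            (Real.sqrt K2 * Real.sqrt ε * Real.sqrt M2 * Real.sqrt D2) := by
          refine mul_le_mul_of_nonneg_right (by linarith) (by positivity)
      _ = (Real.sqrt Gm + 4) * Real.sqrt K2 * Real.sqrt ε * Real.sqrt M2 * Real.sqrt D2 := by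
          ring
  calc |(∫ x in (0:ℝ)..1, pe x * φc (x, ε * γ (x / ε))) - P * ∫ x in (0:ℝ)..1, φc (x, 0)|
      ≤ |∫ x in (0:ℝ)..1, pe x * df x|
        + (|∫ x in (0:ℝ)..1, q x * Φf x| + |∫ x in (0:ℝ)..1, q x * Rf x|) := by
        rw [hsplit]
        exact (abs_add_le _ _).trans (add_le_add le_rfl (abs_sub _ _))
    _ ≤ Real.sqrt (K2 * M2) * Real.sqrt ((ε * Gm) * D2)
        + (Real.sqrt ε * (Real.sqrt (K2 * M2) * Real.sqrt D2)
          + Real.sqrt (K2 * M2) * Real.sqrt (ε * D2)) :=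
        add_le_add hI1 (add_le_add hqΦ hqR)
    _ ≤ (Real.sqrt Gm + 4) * Real.sqrt K2 * Real.sqrt ε * Real.sqrt M2 * Real.sqrt D2 := hfin
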